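/- arXiv:2406.04724 — 2 statements merged into one kernel-verified Lean document; each statement's English description precedes it below -/
import Mathlib

section
/- Let S be a finite nonempty set, let γ ∈ [0,1), and let K ≥ 0 and Ξ ≥ 0. Let X be a type of information states equipped with: maps T, P : X → PMF S (the next-observation distributions without and with the adversary, respectively), a map next : X → S → X (the information-state update), and functions rV, rU, V, U, δ : X → ℝ. Suppose: (i) for all x, V x = rV x + γ · ∑_{s'∈S} (T x)(s') · V(next x s'); (ii) for all x, U x = rU x + γ · ∑_{s'∈S} (P x)(s') · U(next x s'); (iii) for all x, δ x = (rV x − rU x) + γ · ∑_{s'∈S} (P x)(s') · δ(next x s'); (iv) 0 ≤ V x ≤ K for all x; (v) TV(T x, P x) ≤ Ξ for all x; (vi) U and δ are bounded functions. Then for every x, |V x − U x − δ x| ≤ γKΞ/(1−γ). -/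
open scoped BigOperators

lemma pmf_sum_toReal {S : Type*} [Fintype S] (p : PMF S) :
    ∑ s : S, (p s).toReal = 1 := by
  have h : ∑ s : S, p s = 1 := by
    rw [← tsum_fintype (L := SummationFilter.unconditional _)]; exact p.tsum_coe
  rw [← ENNReal.toReal_sum (fun s _ => p.apply_ne_top s), h, ENNReal.toReal_one]

/-- Theorem 1 of the paper.
Let `S` be a finite nonempty set, `γ ∈ [0,1)`, `K ≥ 0`, `Ξ ≥ 0`.  Given information
states `X` with next-observation distributions `T, P : X → PMF S` (without and with the
adversary), update `next : X → S → X`, one-step rewards `rV, rU` and value functions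
`V, U, δ` satisfying the three Bellman-type recursions, with `0 ≤ V ≤ K`,
`TV(T x, P x) ≤ Ξ` for all `x`, and `U`, `δ` bounded, then
`|V x − U x − δ x| ≤ γKΞ/(1−γ)` for all `x`. -/
theorem stmt0 {S : Type*} [Fintype S] [Nonempty S]
    (γ K Ξ : ℝ) (hγ0 : 0 ≤ γ) (hγ1 : γ < 1) (hK : 0 ≤ K) (hΞ : 0 ≤ Ξ)
    {X : Type*} (T P : X → PMF S) (next : X → S → X)
    (rV rU V U δ : X → ℝ)
    (hV : ∀ x, V x = rV x + γ * ∑ s' : S, (T x s').toReal * V (next x s'))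
    (hU : ∀ x, U x = rU x + γ * ∑ s' : S, (P x s').toReal * U (next x s'))
    (hδ : ∀ x, δ x = (rV x - rU x) + γ * ∑ s' : S, (P x s').toReal * δ (next x s'))
    (hVlb : ∀ x, 0 ≤ V x) (hVub : ∀ x, V x ≤ K)
    (hTV : ∀ x, (1 / 2 : ℝ) * ∑ s : S, |(T x s).toReal - (P x s).toReal| ≤ Ξ)
    (hUbd : ∃ M, ∀ x, |U x| ≤ M) (hδbd : ∃ M, ∀ x, |δ x| ≤ M) :
    ∀ x, |V x - U x - δ x| ≤ γ * K * Ξ / (1 - γ) := by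
  obtain ⟨MU, hMU⟩ := hUbd
  obtain ⟨Mδ, hMδ⟩ := hδbd
  set W : X → ℝ := fun x => V x - U x - δ x with hWdef
  set M : ℝ := K + MU + Mδ with hMdef
  have h1γ : (0:ℝ) < 1 - γ := by linarith
  have hMbd : ∀ x, |W x| ≤ M := by
    intro x
    have h1 : |V x| ≤ K := by
      rw [abs_of_nonneg (hVlb x)]; exact hVub x
    calc |W x| ≤ |V x| + |U x| + |δ x| := by
          simp only [hWdef]
          calc |V x - U x - δ x| ≤ |V x - U x| + |δ x| := abs_sub _ _
            _ ≤ |V x| + |U x| + |δ x| := by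
                have := abs_sub (V x) (U x); linarith
      _ ≤ M := by have := hMU x; have := hMδ x; simp only [hMdef]; linarith
  -- key contraction step
  have hstep : ∀ C : ℝ, (∀ y, |W y| ≤ C) → ∀ x, |W x| ≤ γ * (K * Ξ) + γ * C := by
    intro C hC x
    have hWx : W x = γ * ∑ s' : S, ((T x s').toReal - (P x s').toReal) * V (next x s')
        + γ * ∑ s' : S, (P x s').toReal * W (next x s') := by
      simp only [hWdef]
      rw [hV x, hU x, hδ x]
      simp only [sub_mul, mul_sub, Finset.sum_sub_distrib]
      ring
    have hsum1 : |∑ s' : S, ((T x s').toReal - (P x s').toReal) * V (next x s')| ≤ K * Ξ := by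
      have hzero : ∑ s' : S, ((T x s').toReal - (P x s').toReal) = 0 := by
        rw [Finset.sum_sub_distrib, pmf_sum_toReal, pmf_sum_toReal, sub_self]
      have heq : ∑ s' : S, ((T x s').toReal - (P x s').toReal) * V (next x s')
          = ∑ s' : S, ((T x s').toReal - (P x s').toReal) * (V (next x s') - K / 2) := by
        simp only [mul_sub, Finset.sum_sub_distrib, ← Finset.sum_mul, hzero, zero_mul, sub_zero]
      rw [heq]
      calc |∑ s' : S, ((T x s').toReal - (P x s').toReal) * (V (next x s') - K / 2)|
          ≤ ∑ s' : S, |((T x s').toReal - (P x s').toReal) * (V (next x s') - K / 2)| :=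
            Finset.abs_sum_le_sum_abs _ _
        _ ≤ ∑ s' : S, |(T x s').toReal - (P x s').toReal| * (K / 2) := by
            apply Finset.sum_le_sum
            intro s _
            rw [abs_mul]
            apply mul_le_mul_of_nonneg_left _ (abs_nonneg _)
            rw [abs_le]
            constructor
            · have := hVlb (next x s); linarith
            · have := hVub (next x s); linarith
        _ = K * ((1/2) * ∑ s : S, |(T x s).toReal - (P x s).toReal|) := by
            rw [← Finset.sum_mul]; ring
        _ ≤ K * Ξ := mul_le_mul_of_nonneg_left (hTV x) hK
    have hsum2 : |∑ s' : S, (P x s').toReal * W (next x s')| ≤ C := by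
      calc |∑ s' : S, (P x s').toReal * W (next x s')|
          ≤ ∑ s' : S, |(P x s').toReal * W (next x s')| := Finset.abs_sum_le_sum_abs _ _
        _ ≤ ∑ s' : S, (P x s').toReal * C := by
            apply Finset.sum_le_sum
            intro s _
            rw [abs_mul, abs_of_nonneg ENNReal.toReal_nonneg]
            exact mul_le_mul_of_nonneg_left (hC _) ENNReal.toReal_nonneg
        _ = C := by rw [← Finset.sum_mul, pmf_sum_toReal, one_mul]
    calc |W x| ≤ γ * |∑ s' : S, ((T x s').toReal - (P x s').toReal) * V (next x s')|
        + γ * |∑ s' : S, (P x s').toReal * W (next x s')| := by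
          rw [hWx]
          calc |γ * _ + γ * _| ≤ |γ * _| + |γ * _| := abs_add_le _ _
            _ = _ := by rw [abs_mul, abs_mul, abs_of_nonneg hγ0]
      _ ≤ γ * (K * Ξ) + γ * C := by
          have := mul_le_mul_of_nonneg_left hsum1 hγ0
          have := mul_le_mul_of_nonneg_left hsum2 hγ0
          linarith
  -- iterate
  intro x
  have hMnn : 0 ≤ M := le_trans (abs_nonneg _) (hMbd x)
  have hiter : ∀ n : ℕ, ∀ y, |W y| ≤ γ * K * Ξ / (1 - γ) + γ ^ n * M := by
    intro n
    induction n with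
    | zero =>
        intro y
        have : 0 ≤ γ * K * Ξ / (1 - γ) :=
          div_nonneg (by positivity) (le_of_lt h1γ)
        simpa using le_trans (hMbd y) (by linarith)
    | succ n ih =>
        intro y
        have := hstep _ ih y
        have hγne : (1 - γ) ≠ 0 := ne_of_gt h1γ
        calc |W y| ≤ γ * (K * Ξ) + γ * (γ * K * Ξ / (1 - γ) + γ ^ n * M) := this
          _ = γ * K * Ξ / (1 - γ) + γ ^ (n+1) * M := by
              field_simp
              ring
  have hlim : Filter.Tendsto (fun n : ℕ => γ * K * Ξ / (1 - γ) + γ ^ n * M)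
      Filter.atTop (nhds (γ * K * Ξ / (1 - γ))) := by
    have h0 : Filter.Tendsto (fun n : ℕ => γ ^ n) Filter.atTop (nhds 0) :=
      tendsto_pow_atTop_nhds_zero_of_lt_one hγ0 hγ1
    have := (h0.mul_const M).const_add (γ * K * Ξ / (1 - γ))
    simpa using this
  exact ge_of_tendsto hlim (Filter.Eventually.of_forall fun n => hiter n x)
end

section
/- Let S be a finite metric space with distance d, let t : S → PMF S and ν : S → PMF S be kernels, let b be a PMF on S, let s_o ∈ S, and let ε, ξ ≥ 0. Suppose: (i) b is supported on the closed ε-ball around s_o; (ii) for all s, s' ∈ S with d(s,s') ≤ ε, W1(t s, t s') ≤ ξ; and (iii) for every s' ∈ S, ν s' is supported on the closed ε-ball around s'. Then W1(t s_o, (b.bind t).bind ν) ≤ ξ + ε. -/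
open scoped BigOperators

/-- A coupling of two PMFs on `S` is a PMF on `S × S` whose marginals are the two PMFs. -/
def IsCoupling {S : Type*} (c : PMF (S × S)) (μ ν : PMF S) : Prop :=
  c.map Prod.fst = μ ∧ c.map Prod.snd = ν

/-- The 1-Wasserstein distance between PMFs on a finite metric space: the infimum over
couplings of the expected distance. -/
noncomputable def W1 {S : Type*} [Fintype S] [MetricSpace S] (μ ν : PMF S) : ℝ :=
  sInf ((fun c : PMF (S × S) => ∑ p : S × S, (c p).toReal * dist p.1 p.2) ''
    {c | IsCoupling c μ ν})



noncomputable def pcost {S : Type*} [Fintype S] [MetricSpace S] (c : PMF (S × S)) : ℝ :=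
  ∑ p : S × S, (c p).toReal * dist p.1 p.2

lemma pmf_toReal_sum {A : Type*} [Fintype A] (p : PMF A) : ∑ a : A, (p a).toReal = 1 := by
  have := p.tsum_coe
  rw [tsum_fintype] at this
  rw [← ENNReal.toReal_sum (fun a _ => p.apply_ne_top a), this, ENNReal.toReal_one]

lemma pcost_nonneg {S : Type*} [Fintype S] [MetricSpace S] (c : PMF (S × S)) : 0 ≤ pcost c :=
  Finset.sum_nonneg fun _ _ => mul_nonneg ENNReal.toReal_nonneg dist_nonneg

lemma pmf_bind_toReal {A B : Type*} [Fintype A] (b : PMF A) (f : A → PMF B) (x : B) :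
    ((b.bind f) x).toReal = ∑ a : A, (b a).toReal * ((f a) x).toReal := by
  rw [PMF.bind_apply, tsum_fintype, ENNReal.toReal_sum]
  · exact Finset.sum_congr rfl fun a _ =>
      ENNReal.toReal_mul
  · exact fun a _ => ENNReal.mul_ne_top (b.apply_ne_top a) ((f a).apply_ne_top x)

lemma pcost_bind {S A : Type*} [Fintype S] [MetricSpace S] [Fintype A]
    (b : PMF A) (f : A → PMF (S × S)) :
    pcost (b.bind f) = ∑ a : A, (b a).toReal * pcost (f a) := by
  unfold pcost
  simp only [pmf_bind_toReal, Finset.sum_mul, Finset.mul_sum]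
  rw [Finset.sum_comm]
  exact Finset.sum_congr rfl fun a _ => Finset.sum_congr rfl fun p _ => by ring

lemma pcost_pure {S : Type*} [Fintype S] [MetricSpace S] (q : S × S) :
    pcost (PMF.pure q) = dist q.1 q.2 := by
  unfold pcost
  rw [Finset.sum_eq_single q]
  · simp
  · intro p _ hp; simp [PMF.pure_apply, hp]
  · simp

/-- product coupling -/
lemma exists_coupling {S : Type*} (μ ν : PMF S) :
    ∃ c : PMF (S × S), c.map Prod.fst = μ ∧ c.map Prod.snd = ν := by
  refine ⟨μ.bind fun x => ν.map fun y => (x, y), ?_, ?_⟩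
  · rw [PMF.map_bind]
    simp only [PMF.map_comp]
    have : ∀ x : S, ν.map (Prod.fst ∘ fun y => (x, y)) = PMF.pure x := fun x => PMF.map_const ν x
    simp only [this]
    simp [PMF.bind_pure]
  · rw [PMF.map_bind]
    simp only [PMF.map_comp]
    have : ∀ x : S, ν.map (Prod.snd ∘ fun y => (x, y)) = ν := fun x => by
      have : (Prod.snd ∘ fun y : S => (x, y)) = id := rfl
      rw [this, PMF.map_id]
    simp only [this, PMF.bind_const]


/-- let `t` be the transition kernel, `ν` the adversary's perturbation
kernel, `b` a belief supported within distance `ε` of the observation `s_o`.  If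
`W1(t s, t s') ≤ ξ` whenever `dist s s' ≤ ε`, and `ν s'` is supported in the closed
`ε`-ball around `s'` for every `s'`, then `W1(t s_o, (b.bind t).bind ν) ≤ ξ + ε`. -/
theorem stmt11 {S : Type*} [Fintype S] [MetricSpace S]
    (t ν : S → PMF S) (b : PMF S) (s_o : S) (ε ξ : ℝ) (hε : 0 ≤ ε) (hξ : 0 ≤ ξ)
    (hb : ∀ s ∈ b.support, s ∈ Metric.closedBall s_o ε)
    (ht : ∀ s s' : S, dist s s' ≤ ε → W1 (t s) (t s') ≤ ξ)
    (hν : ∀ s' : S, ∀ s'' ∈ (ν s').support, s'' ∈ Metric.closedBall s' ε) :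
    W1 (t s_o) ((b.bind t).bind ν) ≤ ξ + ε := by
  refine le_of_forall_pos_le_add fun δ hδ => ?_
  -- choose couplings c s of (t s_o) and (t s)
  have hex : ∀ s : S, ∃ c : PMF (S × S), IsCoupling c (t s_o) (t s) ∧
      (dist s_o s ≤ ε → pcost c < ξ + δ) := by
    intro s
    by_cases hd : dist s_o s ≤ ε
    · have hW : W1 (t s_o) (t s) ≤ ξ := ht s_o s hd
      have hne : ((fun c : PMF (S × S) => ∑ p : S × S, (c p).toReal * dist p.1 p.2) ''
          {c | IsCoupling c (t s_o) (t s)}).Nonempty := by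
        obtain ⟨c, h1, h2⟩ := exists_coupling (t s_o) (t s)
        exact ⟨_, ⟨c, ⟨h1, h2⟩, rfl⟩⟩
      have hlt : W1 (t s_o) (t s) < ξ + δ := lt_of_le_of_lt hW (by linarith)
      have hbd : BddBelow ((fun c : PMF (S × S) => ∑ p : S × S, (c p).toReal * dist p.1 p.2) ''
          {c | IsCoupling c (t s_o) (t s)}) :=
        ⟨0, fun x ⟨c, _, hc⟩ => hc ▸ pcost_nonneg c⟩
      rw [W1, csInf_lt_iff hbd hne] at hlt
      obtain ⟨x, ⟨c, hc, rfl⟩, hx⟩ := hlt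
      exact ⟨c, hc, fun _ => hx⟩
    · obtain ⟨c, h1, h2⟩ := exists_coupling (t s_o) (t s)
      exact ⟨c, ⟨h1, h2⟩, fun h => absurd h hd⟩
  choose c hc hcost using hex
  -- the glued coupling
  set g : S × S → PMF (S × S) := fun q => (ν q.2).map fun z => (q.1, z) with hg
  set γ : PMF (S × S) := b.bind fun s => (c s).bind g with hγ
  have hmarg : IsCoupling γ (t s_o) ((b.bind t).bind ν) := by
    constructor
    · rw [hγ, PMF.map_bind]
      have : ∀ s : S, ((c s).bind g).map Prod.fst = t s_o := by
        intro s
        rw [PMF.map_bind]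
        have h1 : ∀ q : S × S, (g q).map Prod.fst = PMF.pure q.1 := by
          intro q
          rw [hg]
          simp only [PMF.map_comp]; exact PMF.map_const (ν q.2) q.1
        simp only [h1]
        have : ((c s).bind fun q => PMF.pure q.1) = (c s).map Prod.fst := rfl
        rw [this, (hc s).1]
      simp only [this, PMF.bind_const]
    · rw [hγ, PMF.map_bind, PMF.bind_bind]
      have : ∀ s : S, ((c s).bind g).map Prod.snd = (t s).bind ν := by
        intro s
        rw [PMF.map_bind]
        have h1 : ∀ q : S × S, (g q).map Prod.snd = ν q.2 := by
          intro q
          rw [hg]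
          simp only [PMF.map_comp]
          have : (Prod.snd ∘ fun z : S => (q.1, z)) = id := rfl
          rw [this, PMF.map_id]
        simp only [h1]
        have h2 : ((c s).bind fun q => ν q.2) = ((c s).map Prod.snd).bind ν := by
          rw [PMF.bind_map]; rfl
        rw [h2, (hc s).2]
      simp only [this]
  -- cost bound
  have hcostγ : pcost γ ≤ ξ + ε + δ := by
    rw [hγ, pcost_bind]
    have key : ∀ s : S, (b s).toReal * pcost ((c s).bind g) ≤ (b s).toReal * (ξ + δ + ε) := by
      intro s
      by_cases hs : b s = 0
      · simp [hs]
      · have hsup : s ∈ b.support := by simpa [PMF.mem_support_iff] using hs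
        have hd : dist s_o s ≤ ε := by simpa [Metric.mem_closedBall, dist_comm] using hb s hsup
        refine mul_le_mul_of_nonneg_left ?_ ENNReal.toReal_nonneg
        rw [pcost_bind]
        have hgq : ∀ q : S × S, pcost (g q) ≤ dist q.1 q.2 + ε := by
          intro q
          have : g q = (ν q.2).bind fun z => PMF.pure (q.1, z) := rfl
          rw [this, pcost_bind]
          calc ∑ z : S, ((ν q.2) z).toReal * pcost (PMF.pure (q.1, z))
              ≤ ∑ z : S, ((ν q.2) z).toReal * (dist q.1 q.2 + ε) := by
                refine Finset.sum_le_sum fun z _ => ?_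
                by_cases hz : (ν q.2) z = 0
                · simp [hz]
                · have hzsup : z ∈ (ν q.2).support := by simpa [PMF.mem_support_iff] using hz
                  have : dist q.2 z ≤ ε := by
                    simpa [Metric.mem_closedBall, dist_comm] using hν q.2 z hzsup
                  refine mul_le_mul_of_nonneg_left ?_ ENNReal.toReal_nonneg
                  rw [pcost_pure]
                  calc dist q.1 z ≤ dist q.1 q.2 + dist q.2 z := dist_triangle _ _ _
                    _ ≤ dist q.1 q.2 + ε := by linarith
            _ = dist q.1 q.2 + ε := by
                rw [← Finset.sum_mul, pmf_toReal_sum, one_mul]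
        calc ∑ q : S × S, ((c s) q).toReal * pcost (g q)
            ≤ ∑ q : S × S, ((c s) q).toReal * (dist q.1 q.2 + ε) := by
              refine Finset.sum_le_sum fun q _ => mul_le_mul_of_nonneg_left (hgq q)
                ENNReal.toReal_nonneg
          _ = pcost (c s) + ε := by
              simp only [mul_add]
              rw [Finset.sum_add_distrib, ← Finset.sum_mul, pmf_toReal_sum, one_mul]
              rfl
          _ ≤ ξ + δ + ε := by have := hcost s hd; linarith
    calc ∑ s : S, (b s).toReal * pcost ((c s).bind g)
        ≤ ∑ s : S, (b s).toReal * (ξ + δ + ε) := Finset.sum_le_sum fun s _ => key s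
      _ = ξ + δ + ε := by rw [← Finset.sum_mul, pmf_toReal_sum, one_mul]
      _ = ξ + ε + δ := by ring
  refine le_trans ?_ hcostγ
  have hbd : BddBelow ((fun c : PMF (S × S) => ∑ p : S × S, (c p).toReal * dist p.1 p.2) ''
      {c | IsCoupling c (t s_o) ((b.bind t).bind ν)}) :=
    ⟨0, fun x ⟨c, _, hc⟩ => hc ▸ pcost_nonneg c⟩
  exact csInf_le hbd ⟨γ, hmarg, rfl⟩
end
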